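/- arXiv:1008.1812 — 3 statements merged into one kernel-verified Lean document; each statement's English description precedes it below -/
import Mathlib

section
/- For integers x, y ≥ 1 and 0 < ρ < 1, the integral (1/(Γ(x)Γ(y))) ∫₀^∞ Γ(x, ρz/(1-ρ)) z^{y-1} e^{-z} dz equals (1/(y-1)!) (1-ρ)^y ∑_{j=0}^{x-1} ((j+y-1)!/j!) ρ^j, where Γ(x,z) = ∫_z^∞ u^{x-1} e^{-u} du is the upper incomplete gamma function. -/
open MeasureTheory Real Set Filter Topology

/-- The upper incomplete gamma function `Γ(x, z) = ∫_z^∞ u^{x-1} e^{-u} du`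
for a positive integer `x`. -/
noncomputable def upperIncGamma (x : ℕ) (z : ℝ) : ℝ :=
  ∫ u in Set.Ioi z, u ^ (x - 1) * Real.exp (-u)

lemma intOn_pow_exp (n : ℕ) {b : ℝ} (hb : 0 < b) (a : ℝ) :
    IntegrableOn (fun u : ℝ => u ^ n * Real.exp (-(b * u))) (Ioi a) := by
  refine integrable_of_isBigO_exp_neg (b := b / 2) (by positivity) ?_ ?_
  · exact ((continuous_pow n).mul
      (Real.continuous_exp.comp (continuous_const.mul continuous_id).neg)).continuousOn
  · have h := tendsto_rpow_mul_exp_neg_mul_atTop_nhds_zero (n : ℝ) (b / 2) (by positivity)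
    simp_rw [Real.rpow_natCast] at h
    refine ((Asymptotics.isLittleO_iff_tendsto
      (fun x hx => absurd hx (Real.exp_ne_zero _))).2 ?_).isBigO
    refine h.congr fun x => ?_
    rw [mul_div_assoc, ← Real.exp_sub]
    congr 2
    ring

lemma step_int (n : ℕ) (a : ℝ) :
    ∫ u in Ioi a, u ^ (n + 1) * Real.exp (-u)
      = a ^ (n + 1) * Real.exp (-a) + ((n : ℝ) + 1) * ∫ u in Ioi a, u ^ n * Real.exp (-u) := by
  have h1 : IntegrableOn (fun u : ℝ => u ^ (n + 1) * Real.exp (-u)) (Ioi a) := by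
    have := intOn_pow_exp (n + 1) one_pos a
    simpa using this
  have h2 : IntegrableOn (fun u : ℝ => u ^ n * Real.exp (-u)) (Ioi a) := by
    have := intOn_pow_exp n one_pos a
    simpa using this
  have key := integral_Ioi_of_hasDerivAt_of_tendsto'
    (f := fun u : ℝ => -(u ^ (n + 1) * Real.exp (-u)))
    (f' := fun u : ℝ => u ^ (n + 1) * Real.exp (-u) - ((n : ℝ) + 1) * (u ^ n * Real.exp (-u)))
    (a := a) (m := 0)
    (fun u _ => by
      have := ((hasDerivAt_pow (n + 1) u).mul (((hasDerivAt_id u).neg).exp)).neg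
      convert this using 1
      · funext v; simp
      simp only [Pi.neg_apply, id_eq]
      push_cast
      ring)
    (h1.sub (h2.const_mul _))
    (by simpa using (tendsto_pow_mul_exp_neg_atTop_nhds_zero (n + 1)).neg)
  rw [integral_sub h1 (h2.const_mul _), integral_const_mul] at key
  simp only [zero_sub, neg_neg] at key
  linarith [key]

lemma pow_mul_exp_integral_Ioi (n : ℕ) (a : ℝ) :
    ∫ u in Ioi a, u ^ n * Real.exp (-u)
      = Real.exp (-a) * ∑ k ∈ Finset.range (n + 1),
          ((n.factorial : ℝ) / (k.factorial : ℝ)) * a ^ k := by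
  induction n with
  | zero =>
    have key := integral_Ioi_of_hasDerivAt_of_tendsto'
      (f := fun u : ℝ => -Real.exp (-u))
      (f' := fun u : ℝ => u ^ 0 * Real.exp (-u))
      (a := a) (m := 0)
      (fun u _ => by convert ((hasDerivAt_id u).neg.exp).neg using 1; exacts [by funext v; simp, by simp])
      (by simpa using intOn_pow_exp 0 one_pos a)
      (by
        have : Tendsto (fun u : ℝ => Real.exp (-u)) atTop (𝓝 0) := by
          simpa using Real.tendsto_exp_comp_nhds_zero.2 tendsto_neg_atTop_atBot
        simpa using this.neg)
    simp at key
    simp [key]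
  | succ n ih =>
    have hfac : (∀ k ∈ Finset.range (n + 1),
        (((n + 1).factorial : ℝ) / (k.factorial : ℝ)) * a ^ k
          = ((n : ℝ) + 1) * (((n.factorial : ℝ) / (k.factorial : ℝ)) * a ^ k)) := by
      intro k _
      rw [Nat.factorial_succ]
      push_cast
      ring
    have hr : ∑ k ∈ Finset.range (n + 1 + 1), (((n + 1).factorial : ℝ) / (k.factorial : ℝ)) * a ^ k
        = ((n : ℝ) + 1) * ∑ k ∈ Finset.range (n + 1),
            ((n.factorial : ℝ) / (k.factorial : ℝ)) * a ^ k + a ^ (n + 1) := by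
      rw [Finset.sum_range_succ, Finset.sum_congr rfl hfac, ← Finset.mul_sum,
        div_self (by exact_mod_cast (Nat.factorial_ne_zero (n + 1)) :
          (((n + 1).factorial : ℝ)) ≠ 0), one_mul]
    rw [step_int n a, ih, hr]
    ring

lemma int_pow_exp_mul (m : ℕ) {r : ℝ} (hr : 0 < r) :
    ∫ z in Ioi (0 : ℝ), z ^ m * Real.exp (-(r * z)) = (m.factorial : ℝ) / r ^ (m + 1) := by
  have h := integral_rpow_mul_exp_neg_mul_Ioi (a := (m : ℝ) + 1) (by positivity) hr
  rw [show ((m : ℝ) + 1 - 1) = ((m : ℕ) : ℝ) by push_cast; ring] at h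
  rw [show ((m : ℝ) + 1) = (((m + 1 : ℕ)) : ℝ) by push_cast; ring] at h
  simp_rw [Real.rpow_natCast] at h
  rw [show (((m + 1 : ℕ)) : ℝ) = (m : ℝ) + 1 by norm_num,
    Real.Gamma_nat_eq_factorial] at h
  rw [h, div_pow, one_pow]
  ring

theorem integral_upperIncGamma_eq (x y : ℕ) (hx : 1 ≤ x) (hy : 1 ≤ y)
    (ρ : ℝ) (hρ0 : 0 < ρ) (hρ1 : ρ < 1) :
    (1 / ((Nat.factorial (x - 1) : ℝ) * (Nat.factorial (y - 1) : ℝ))) *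
        ∫ z in Set.Ioi (0 : ℝ),
          upperIncGamma x (ρ / (1 - ρ) * z) * z ^ (y - 1) * Real.exp (-z)
      = (1 / (Nat.factorial (y - 1) : ℝ)) * (1 - ρ) ^ y *
          ∑ j ∈ Finset.range x,
            ((Nat.factorial (j + y - 1) : ℝ) / (Nat.factorial j : ℝ)) * ρ ^ j := by
  set c := ρ / (1 - ρ) with hcdef
  have h1ρ : 0 < 1 - ρ := by linarith
  have hc : 0 < c := div_pos hρ0 h1ρ
  have h1c : 0 < 1 + c := by linarith
  have hrc : 1 + c = 1 / (1 - ρ) := by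
    rw [hcdef]; field_simp; ring
  have hxy : ∀ j : ℕ, j + y - 1 + 1 = j + y := fun j => by omega
  have hint : ∀ z : ℝ, upperIncGamma x (c * z) * z ^ (y - 1) * Real.exp (-z)
      = ∑ j ∈ Finset.range x, ((((x - 1).factorial : ℝ) / (j.factorial : ℝ)) * c ^ j) *
          (z ^ (j + y - 1) * Real.exp (-((1 + c) * z))) := by
    intro z
    rw [upperIncGamma, pow_mul_exp_integral_Ioi (x - 1) (c * z),
      show x - 1 + 1 = x by omega, Finset.mul_sum, Finset.sum_mul, Finset.sum_mul]
    refine Finset.sum_congr rfl fun j hj => ?_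
    rw [show j + y - 1 = j + (y - 1) by omega, pow_add, mul_pow,
      show -((1 + c) * z) = -(c * z) + -z by ring, Real.exp_add]
    ring
  simp_rw [hint]
  rw [integral_finset_sum _ (fun j _ => ((intOn_pow_exp (j + y - 1) h1c 0).const_mul _))]
  simp_rw [integral_const_mul]
  rw [Finset.mul_sum, Finset.mul_sum]
  refine Finset.sum_congr rfl fun j hj => ?_
  rw [int_pow_exp_mul (j + y - 1) h1c, hxy j, hrc, hcdef]
  have hx1 : (((x - 1).factorial : ℝ)) ≠ 0 := by exact_mod_cast Nat.factorial_ne_zero _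
  have hj1 : ((j.factorial : ℝ)) ≠ 0 := by exact_mod_cast Nat.factorial_ne_zero _
  have hy1 : (((y - 1).factorial : ℝ)) ≠ 0 := by exact_mod_cast Nat.factorial_ne_zero _
  have hne : (1 - ρ) ≠ 0 := ne_of_gt h1ρ
  field_simp
  rw [one_div, div_eq_mul_inv, mul_pow, pow_add, mul_assoc ((1 - ρ)⁻¹ ^ j), ← mul_pow (1 - ρ)⁻¹ (1 - ρ) y,
    inv_mul_cancel₀ hne, one_pow, mul_one, mul_comm]
end

section
/- Let X ~ Gamma(x, ρ) and Y ~ Gamma(y, 1-ρ) be independent random variables with integer shape parameters x, y ≥ 1 and rates ρ and 1-ρ respectively, where 0 < ρ < 1. Then P(X ≥ Y) = (1/(y-1)!) (1-ρ)^y ∑_{j=0}^{x-1} ((j+y-1)!/j!) ρ^j. -/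
open MeasureTheory ProbabilityTheory Real

section aux
open Set Filter Topology
open scoped ENNReal NNReal

lemma integrableOn_pow_mul_exp_neg_mul (n : ℕ) {b : ℝ} (hb : 0 < b) {t : ℝ} (ht : 0 ≤ t) :
    IntegrableOn (fun u : ℝ => u ^ n * exp (-(b * u))) (Set.Ioi t) := by
  have h := integrableOn_rpow_mul_exp_neg_mul_rpow (s := (n : ℝ)) (p := 1) (b := b)
    (lt_of_lt_of_le neg_one_lt_zero (Nat.cast_nonneg n)) zero_lt_one hb
  have h2 : IntegrableOn (fun u : ℝ => u ^ n * exp (-(b * u))) (Set.Ioi 0) := by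
    refine h.congr_fun (fun u hu => ?_) measurableSet_Ioi
    beta_reduce; rw [Real.rpow_one, Real.rpow_natCast, neg_mul]
  exact h2.mono_set (Set.Ioi_subset_Ioi ht)

lemma integral_pow_mul_exp_neg_mul (n : ℕ) {b : ℝ} (hb : 0 < b) :
    ∀ t : ℝ, 0 ≤ t → ∫ u in Set.Ioi t, u ^ n * exp (-(b * u))
      = exp (-(b * t)) * ∑ j ∈ Finset.range (n + 1),
          ((n.factorial : ℝ) / (j.factorial : ℝ)) * t ^ j / b ^ (n + 1 - j) := by
  induction n with
  | zero =>
    intro t ht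
    have hF : ∀ u : ℝ, HasDerivAt (fun u : ℝ => -(exp (-(b * u)) / b)) (u ^ 0 * exp (-(b * u))) u := by
      intro u
      have h1 : HasDerivAt (fun u : ℝ => -(b * u)) (-b) u := by
        have := ((hasDerivAt_id u).const_mul b).neg; simp only [id, mul_one] at this; exact this
      have := ((h1.exp).div_const b).neg
      refine this.congr_deriv ?_
      have hb0 : b ≠ 0 := hb.ne'
      field_simp
    have hbt : Tendsto (fun u : ℝ => -(b * u)) atTop atBot := by
      exact tendsto_neg_atTop_atBot.comp (Tendsto.const_mul_atTop hb tendsto_id)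
    have htend : Tendsto (fun u : ℝ => -(exp (-(b * u)) / b)) atTop (𝓝 0) := by
      simpa using ((Real.tendsto_exp_atBot.comp hbt).div_const b).neg
    have := integral_Ioi_of_hasDerivAt_of_tendsto' (fun u _ => hF u)
      (integrableOn_pow_mul_exp_neg_mul 0 hb ht) htend
    rw [this]
    simp [Nat.factorial]
    ring
  | succ n ih =>
    intro t ht
    have h1 : ∀ u : ℝ, HasDerivAt (fun u : ℝ => -(b * u)) (-b) u := by
      intro u; have := ((hasDerivAt_id u).const_mul b).neg; simp only [id, mul_one] at this; exact this
    have hF : ∀ u : ℝ, HasDerivAt (fun u : ℝ => -(u ^ (n+1) * exp (-(b * u)) / b))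
        (u ^ (n+1) * exp (-(b*u)) - ((n+1 : ℝ)/b) * (u ^ n * exp (-(b*u)))) u := by
      intro u
      have h2 : HasDerivAt (fun u : ℝ => u ^ (n+1) * exp (-(b*u)))
          (((n+1 : ℕ) : ℝ) * u ^ n * exp (-(b*u)) + u^(n+1) * (exp (-(b*u)) * -b)) u :=
        (hasDerivAt_pow (n+1) u).mul (h1 u).exp
      have h3 := (h2.div_const b).neg
      refine h3.congr_deriv ?_
      push_cast
      have hb0 : b ≠ 0 := hb.ne'
      field_simp
      ring
    have htend : Tendsto (fun u : ℝ => -(u ^ (n+1) * exp (-(b * u)) / b)) atTop (𝓝 0) := by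
      have hbt : Tendsto (fun u : ℝ => b * u) atTop atTop :=
        Tendsto.const_mul_atTop hb tendsto_id
      have h4 : Tendsto (fun u : ℝ => (b*u) ^ (n+1) * exp (-(b * u))) atTop (𝓝 0) := by
        have := (tendsto_pow_mul_exp_neg_atTop_nhds_zero (n+1)).comp hbt
        simpa [Function.comp_def] using this
      have h5 : Tendsto (fun u : ℝ => -((b*u) ^ (n+1) * exp (-(b * u)) / b ^ (n+2))) atTop (𝓝 0) := by
        simpa using (h4.div_const (b ^ (n+2))).neg
      refine h5.congr (fun u => ?_)
      rw [mul_pow]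
      have hbn : (b:ℝ) ^ (n+1) ≠ 0 := pow_ne_zero _ hb.ne'
      field_simp
      ring
    have hint1 := integrableOn_pow_mul_exp_neg_mul (n+1) hb ht
    have hint2 := (integrableOn_pow_mul_exp_neg_mul n hb ht).const_mul ((n+1:ℝ)/b)
    have key := integral_Ioi_of_hasDerivAt_of_tendsto' (fun u _ => hF u) (hint1.sub hint2) htend
    rw [integral_sub hint1 hint2, integral_const_mul] at key
    have hIn := ih t ht
    have hsum : ∑ j ∈ Finset.range (n+1+1), ((Nat.factorial (n+1) : ℝ)/(j.factorial)) * t ^ j / b ^ (n+1+1-j)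
        = ((n+1:ℝ)/b) * (∑ j ∈ Finset.range (n+1), ((n.factorial : ℝ)/(j.factorial)) * t ^ j / b ^ (n+1-j)) + t^(n+1)/b := by
      rw [Finset.sum_range_succ, Finset.mul_sum]
      congr 1
      · apply Finset.sum_congr rfl
        intro j hj
        have hj' : j ≤ n := Nat.lt_succ_iff.mp (Finset.mem_range.mp hj)
        have he : n+1+1-j = (n+1-j)+1 := by omega
        rw [he, pow_succ, Nat.factorial_succ]
        have hbj : (b:ℝ) ^ (n+1-j) ≠ 0 := pow_ne_zero _ hb.ne'
        have hjf : (j.factorial : ℝ) ≠ 0 := Nat.cast_ne_zero.mpr (Nat.factorial_ne_zero _)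
        push_cast
        field_simp
      · have he : n+1+1-(n+1) = 1 := by omega
        rw [he, pow_one]
        have hf : (Nat.factorial (n+1) : ℝ) ≠ 0 := Nat.cast_ne_zero.mpr (Nat.factorial_ne_zero _)
        field_simp
    rw [hsum]
    linear_combination key + ((n+1:ℝ)/b) * hIn

lemma integral_pow_mul_exp_neg_Ioi_zero (m : ℕ) :
    ∫ u in Set.Ioi (0:ℝ), u ^ m * exp (-u) = (m.factorial : ℝ) := by
  have h := integral_pow_mul_exp_neg_mul m one_pos 0 le_rfl
  simp only [one_mul, mul_zero, neg_zero, Real.exp_zero] at h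
  rw [h]
  rw [Finset.sum_eq_single_of_mem 0 (Finset.mem_range.mpr (Nat.succ_pos m))]
  · simp
  · intro j _ hj
    simp [zero_pow hj]

lemma gamma_survival {x : ℕ} (hx : 1 ≤ x) {ρ : ℝ} (hρ : 0 < ρ) {t : ℝ} (ht : 0 ≤ t) :
    gammaMeasure (x : ℝ) ρ (Set.Ici t)
      = ENNReal.ofReal (exp (-(ρ * t)) * ∑ j ∈ Finset.range x, (ρ*t)^j / (Nat.factorial j)) := by
  have hfac : ((x-1).factorial : ℝ) ≠ 0 := Nat.cast_ne_zero.mpr (Nat.factorial_ne_zero _)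
  rw [gammaMeasure, withDensity_apply _ measurableSet_Ici,
      ← setLIntegral_congr (Ioi_ae_eq_Ici (μ := volume) (a := t))]
  have hpdf : ∀ u ∈ Set.Ioi t, gammaPDF (x:ℝ) ρ u
      = ENNReal.ofReal ((ρ^x / ((x-1).factorial : ℝ)) * (u ^ (x-1) * exp (-(ρ*u)))) := by
    intro u hu
    have hu0 : (0:ℝ) < u := lt_of_le_of_lt ht hu
    rw [gammaPDF_of_nonneg hu0.le]
    congr 1
    have hcast : ((x:ℝ) - 1) = ((x - 1 : ℕ) : ℝ) := by
      rw [Nat.cast_sub hx]; simp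
    have hg : Real.Gamma (x:ℝ) = ((x-1).factorial : ℝ) := by
      rw [show (x:ℝ) = ((x - 1 : ℕ) : ℝ) + 1 by rw [Nat.cast_sub hx]; simp,
        Real.Gamma_nat_eq_factorial]
    rw [hg, hcast, Real.rpow_natCast, Real.rpow_natCast]
    ring
  rw [setLIntegral_congr_fun measurableSet_Ioi hpdf]
  have hint : IntegrableOn
      (fun u : ℝ => (ρ^x / ((x-1).factorial : ℝ)) * (u ^ (x-1) * exp (-(ρ*u)))) (Set.Ioi t) :=
    (integrableOn_pow_mul_exp_neg_mul (x-1) hρ ht).const_mul _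
  have hnn : 0 ≤ᵐ[volume.restrict (Set.Ioi t)]
      (fun u : ℝ => (ρ^x / ((x-1).factorial : ℝ)) * (u ^ (x-1) * exp (-(ρ*u)))) := by
    refine (ae_restrict_iff' measurableSet_Ioi).mpr (ae_of_all _ fun u hu => ?_)
    have hu0 : (0:ℝ) ≤ u := le_trans ht (le_of_lt hu)
    positivity
  rw [← ofReal_integral_eq_lintegral_ofReal hint hnn]
  congr 1
  rw [integral_const_mul, integral_pow_mul_exp_neg_mul (x-1) hρ t ht,
      Nat.sub_add_cancel hx, mul_left_comm, Finset.mul_sum]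
  congr 1
  apply Finset.sum_congr rfl
  intro j hj
  have hjx : j < x := Finset.mem_range.mp hj
  have hpow : ρ ^ (x - j) * ρ ^ j = ρ ^ x := by
    rw [← pow_add]; congr 1; omega
  have hρj : (ρ:ℝ) ^ (x-j) ≠ 0 := pow_ne_zero _ hρ.ne'
  have hjf : (j.factorial : ℝ) ≠ 0 := Nat.cast_ne_zero.mpr (Nat.factorial_ne_zero _)
  rw [mul_pow, ← hpow]
  field_simp

lemma integrableOn_pow_mul_exp_neg (n : ℕ) :
    IntegrableOn (fun u : ℝ => u ^ n * exp (-u)) (Set.Ioi (0:ℝ)) := by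
  have := integrableOn_pow_mul_exp_neg_mul n one_pos (le_refl (0:ℝ))
  simpa using this

end aux

section main
open Set Filter Topology
open scoped ENNReal NNReal

theorem gamma_vs_gamma_prob {Ω : Type*} [MeasurableSpace Ω]
    (P : Measure Ω) [IsProbabilityMeasure P]
    (x y : ℕ) (hx : 1 ≤ x) (hy : 1 ≤ y) (ρ : ℝ) (hρ0 : 0 < ρ) (hρ1 : ρ < 1)
    (X Y : Ω → ℝ)
    (hX : Measure.map X P = gammaMeasure (x : ℝ) ρ)
    (hY : Measure.map Y P = gammaMeasure (y : ℝ) (1 - ρ))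
    (hXY : IndepFun X Y P) :
    P {ω | Y ω ≤ X ω}
      = ENNReal.ofReal
          ((1 / (Nat.factorial (y - 1) : ℝ)) * (1 - ρ) ^ y *
            ∑ j ∈ Finset.range x,
              ((Nat.factorial (j + y - 1) : ℝ) / (Nat.factorial j : ℝ)) * ρ ^ j) := by
  have hxR : (0:ℝ) < x := by exact_mod_cast hx
  have hyR : (0:ℝ) < y := by exact_mod_cast hy
  have h1ρ : 0 < 1 - ρ := by linarith
  haveI hPX : IsProbabilityMeasure (gammaMeasure (x:ℝ) ρ) := isProbabilityMeasure_gammaMeasure hxR hρ0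
  haveI hPY : IsProbabilityMeasure (gammaMeasure (y:ℝ) (1-ρ)) := isProbabilityMeasure_gammaMeasure hyR h1ρ
  have hXm : AEMeasurable X P := by
    apply aemeasurable_of_map_neZero; rw [hX]; infer_instance
  have hYm : AEMeasurable Y P := by
    apply aemeasurable_of_map_neZero; rw [hY]; infer_instance
  have hs : MeasurableSet {p : ℝ × ℝ | p.2 ≤ p.1} := measurableSet_le measurable_snd measurable_fst
  have joint : P.map (fun ω => (X ω, Y ω)) = (P.map X).prod (P.map Y) :=
    (indepFun_iff_map_prod_eq_prod_map_map hXm hYm).mp hXY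
  have h2 : P {ω | Y ω ≤ X ω}
      = (gammaMeasure (x:ℝ) ρ).prod (gammaMeasure (y:ℝ) (1-ρ)) {p : ℝ × ℝ | p.2 ≤ p.1} := by
    rw [← hX, ← hY, ← joint, Measure.map_apply_of_aemeasurable (hXm.prodMk hYm) hs]
    rfl
  rw [h2, Measure.prod_apply_symm hs]
  have hpre : ∀ t : ℝ, (fun u : ℝ => (u, t)) ⁻¹' {p : ℝ × ℝ | p.2 ≤ p.1} = Set.Ici t := by
    intro t; ext u; simp
  simp_rw [hpre]
  have hanti : Antitone (fun t : ℝ => gammaMeasure (x:ℝ) ρ (Set.Ici t)) :=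
    fun a b hab => measure_mono (Set.Ici_subset_Ici.mpr hab)
  have hmeas : Measurable (gammaPDF (y:ℝ) (1-ρ)) :=
    (measurable_gammaPDFReal (y:ℝ) (1-ρ)).ennreal_ofReal
  rw [show gammaMeasure (y:ℝ) (1-ρ) = volume.withDensity (gammaPDF (y:ℝ) (1-ρ)) from rfl,
    lintegral_withDensity_eq_lintegral_mul _ hmeas hanti.measurable]
  set F : ℝ → ℝ≥0∞ := (gammaPDF (y:ℝ) (1-ρ) * fun t => gammaMeasure (x:ℝ) ρ (Set.Ici t)) with hF
  rw [← lintegral_add_compl F (measurableSet_Iio (a := (0:ℝ))), Set.compl_Iio]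
  have hzero : ∫⁻ t in Set.Iio (0:ℝ), F t = 0 := by
    have h0 : ∀ t ∈ Set.Iio (0:ℝ), F t = 0 := by
      intro t ht
      simp [hF, Pi.mul_apply, gammaPDF_of_neg ht]
    rw [setLIntegral_congr_fun measurableSet_Iio h0, lintegral_zero]
  rw [hzero, zero_add, ← setLIntegral_congr (Ioi_ae_eq_Ici (μ := volume) (a := (0:ℝ)))]
  set G : ℝ → ℝ := fun t => ∑ j ∈ Finset.range x,
      ((1-ρ)^y * ρ^j / (((y-1).factorial : ℝ) * (j.factorial : ℝ))) * (t^(y-1+j) * exp (-t))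
    with hG
  have hyfac : ((y-1).factorial : ℝ) ≠ 0 := Nat.cast_ne_zero.mpr (Nat.factorial_ne_zero _)
  have hGt : ∀ t ∈ Set.Ioi (0:ℝ), F t = ENNReal.ofReal (G t) := by
    intro t ht
    have ht0 : (0:ℝ) ≤ t := le_of_lt ht
    have hpdfnn : 0 ≤ (1-ρ)^(y:ℝ) / Real.Gamma (y:ℝ) * t ^ ((y:ℝ)-1) * exp (-((1-ρ)*t)) := by
      have := Real.Gamma_pos_of_pos hyR
      positivity
    rw [hF, Pi.mul_apply, gamma_survival hx hρ0 ht0, gammaPDF_of_nonneg ht0,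
      ← ENNReal.ofReal_mul hpdfnn]
    congr 1
    have hcast : ((y:ℝ) - 1) = ((y - 1 : ℕ) : ℝ) := by rw [Nat.cast_sub hy]; simp
    have hg : Real.Gamma (y:ℝ) = ((y-1).factorial : ℝ) := by
      rw [show (y:ℝ) = ((y - 1 : ℕ) : ℝ) + 1 by rw [Nat.cast_sub hy]; simp,
        Real.Gamma_nat_eq_factorial]
    rw [hg, hcast, Real.rpow_natCast, Real.rpow_natCast, hG]
    rw [Finset.mul_sum, Finset.mul_sum]
    apply Finset.sum_congr rfl
    intro j hj
    have hexp : exp (-((1-ρ)*t)) * exp (-(ρ*t)) = exp (-t) := by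
      rw [← Real.exp_add]; ring_nf
    have hjf : (j.factorial : ℝ) ≠ 0 := Nat.cast_ne_zero.mpr (Nat.factorial_ne_zero _)
    rw [pow_add, mul_pow, ← hexp]
    field_simp
  rw [setLIntegral_congr_fun measurableSet_Ioi hGt]
  have hterm : ∀ j : ℕ, IntegrableOn
      (fun t : ℝ => ((1-ρ)^y * ρ^j / (((y-1).factorial : ℝ) * (j.factorial : ℝ))) *
        (t^(y-1+j) * exp (-t))) (Set.Ioi (0:ℝ)) :=
    fun j => (integrableOn_pow_mul_exp_neg (y-1+j)).const_mul _
  have hGint : IntegrableOn G (Set.Ioi (0:ℝ)) := by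
    rw [hG]; exact integrable_finset_sum _ (fun j _ => hterm j)
  have hGnn : 0 ≤ᵐ[volume.restrict (Set.Ioi (0:ℝ))] G := by
    refine (ae_restrict_iff' measurableSet_Ioi).mpr (ae_of_all _ fun t ht => ?_)
    have ht0 : (0:ℝ) ≤ t := le_of_lt ht
    apply Finset.sum_nonneg
    intro j _
    positivity
  rw [← ofReal_integral_eq_lintegral_ofReal hGint hGnn]
  rw [hG, integral_finset_sum _ (fun j _ => hterm j)]
  congr 1
  rw [Finset.mul_sum]
  apply Finset.sum_congr rfl
  intro j hj
  rw [integral_const_mul, integral_pow_mul_exp_neg_Ioi_zero (y-1+j)]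
  have hjy : j + y - 1 = y - 1 + j := by omega
  rw [hjy]
  have hjf : (j.factorial : ℝ) ≠ 0 := Nat.cast_ne_zero.mpr (Nat.factorial_ne_zero _)
  field_simp

end main
end

section
/- Let k⁺ ≥ 1 be an integer, ρ ∈ (0,1) with 1 − ρ > 1/(1 + k⁺). Then the equation λ(1 − (1−ρ)λ)^{k⁺} = ρ^{k⁺} has a solution λ ∈ (0,1), i.e., the function g(λ) = λ(1 − (1−ρ)λ)^{k⁺} − ρ^{k⁺} has a zero in the open interval (0,1). -/
theorem exists_root_queue_eq (k : ℕ) (hk : 1 ≤ k) (ρ : ℝ) (hρ0 : 0 < ρ) (hρ1 : ρ < 1)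
    (hrare : 1 / (1 + (k : ℝ)) < 1 - ρ) :
    ∃ lam ∈ Set.Ioo (0 : ℝ) 1, lam * (1 - (1 - ρ) * lam) ^ k - ρ ^ k = 0 := by
  set s : ℝ := 1 - ρ with hs
  have hs0 : 0 < s := by linarith
  have hk1 : (0:ℝ) < 1 + (k:ℝ) := by positivity
  set a : ℝ := 1 / ((1 + (k:ℝ)) * s) with ha
  have ha0 : 0 < a := by positivity
  have ha1 : a < 1 := by
    rw [ha, div_lt_one (by positivity)]
    have := (div_lt_iff₀ hk1).mp hrare
    linarith [this]
  set f : ℝ → ℝ := fun x => x * (1 - s * x) ^ k with hf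
  -- derivative
  have hderiv : ∀ x : ℝ, HasDerivAt f ((1 - s*x)^k + x * ((k:ℝ) * (1 - s*x)^(k-1) * (-s))) x := by
    intro x
    have h1 : HasDerivAt (fun x : ℝ => 1 - s * x) (-s) x := by
      simpa using ((hasDerivAt_id x).const_mul s).const_sub 1
    have h2 := h1.pow k
    have h3 := (hasDerivAt_id x).mul h2
    convert h3 using 1
    · rfl
    · rfl
    · ext y; simp [hf]
    · simp
  have hanti : StrictAntiOn f (Set.Icc a 1) := by
    apply strictAntiOn_of_deriv_neg (convex_Icc a 1)
    · exact Continuous.continuousOn (by fun_prop)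
    · intro x hx
      rw [interior_Icc] at hx
      have hd := (hderiv x).deriv
      rw [hd]
      have hu : ρ < 1 - s * x := by
        have : s * x < s * 1 := by nlinarith [hx.2, hs0]
        simp only [hs] at this ⊢
        linarith
      have hu0 : 0 < 1 - s * x := by linarith
      have hneg : 1 - (1 + (k:ℝ)) * s * x < 0 := by
        have : a < x := hx.1
        rw [ha, div_lt_iff₀ (by positivity)] at this
        nlinarith
      have hfac : (1 - s*x)^k + x * ((k:ℝ) * (1 - s*x)^(k-1) * (-s))
          = (1 - s*x)^(k-1) * (1 - (1 + (k:ℝ)) * s * x) := by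
        have hksub : k = (k-1) + 1 := (Nat.succ_pred_eq_of_pos hk).symm
        rw [hksub]
        simp only [Nat.add_sub_cancel]
        push_cast [pow_succ]
        ring
      rw [hfac]
      exact mul_neg_of_pos_of_neg (pow_pos hu0 _) hneg
  set c : ℝ := (a + 1) / 2 with hc
  have hac : a < c := by rw [hc]; linarith
  have hc1 : c < 1 := by rw [hc]; linarith
  have hc0 : 0 < c := by linarith
  have hfc : ρ ^ k < f c := by
    have := hanti ⟨hac.le, hc1.le⟩ ⟨ha1.le, le_rfl⟩ hc1
    have hf1 : f 1 = ρ ^ k := by simp [hf, hs]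
    rw [hf1] at this; exact this
  -- IVT on [0, c]
  have hcont : ContinuousOn f (Set.Icc 0 c) := Continuous.continuousOn (by fun_prop)
  have hsub := intermediate_value_Ioo (le_of_lt hc0) hcont
  have h0 : f 0 = 0 := by simp [hf]
  have hmem : (ρ:ℝ)^k ∈ Set.Ioo (f 0) (f c) := by
    rw [h0]; exact ⟨pow_pos hρ0 k, hfc⟩
  obtain ⟨lam, hlam, hval⟩ := hsub hmem
  simp only [hf] at hval
  exact ⟨lam, ⟨hlam.1, lt_trans hlam.2 hc1⟩, by rw [hval]; ring⟩
end
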